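/- Let N, L be positive integers with L < N, let s : Fin N → ℝ be strictly positive and sorted in nondecreasing order (s[1] ≤ s[2] ≤ ... ≤ s[N]). Suppose k* ∈ {1,...,N} and c = (L − N + k*) / (∑_{n=1}^{k*} s[n]) satisfy c ≤ 1/s[k*] and (if k* < N) 1/s[k*+1] < c and c > 0. Define μ[n] = c·s[n] for n ≤ k* and μ[n] = 1 for n > k*. Then ∑ n, μ[n] = L, 0 ≤ μ[n] ≤ 1 for all n, and μ minimizes max_n μ[n]/s[n] over all vectors ν with ∑ ν[n] = L and 0 ≤ ν[n] ≤ 1. -/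

import Mathlib

open Finset

theorem stmt10 (N L : ℕ) (hN : 0 < N) (hL : 0 < L) (hLN : L < N)
    (s : Fin N → ℝ) (hs : ∀ n, 0 < s n)
    (hsort : ∀ m n : Fin N, m ≤ n → s m ≤ s n)
    (k : Fin N) (c : ℝ)
    (hc : c = ((L : ℝ) - N + ((k : ℕ) + 1)) / (∑ n ∈ univ.filter (fun n => n ≤ k), s n))
    (hcpos : 0 < c)
    (hck : c ≤ 1 / s k)
    (hck1 : ∀ n : Fin N, (n : ℕ) = (k : ℕ) + 1 → 1 / s n < c)
    (μ : Fin N → ℝ) (hμ : ∀ n, μ n = if n ≤ k then c * s n else 1) :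
    (∑ n, μ n = (L : ℝ)) ∧ (∀ n, 0 ≤ μ n ∧ μ n ≤ 1) ∧
    (∀ ν : Fin N → ℝ, (∑ n, ν n = (L : ℝ)) → (∀ n, 0 ≤ ν n ∧ ν n ≤ 1) →
      (⨆ n, μ n / s n) ≤ ⨆ n, ν n / s n) := by
  have hne : Nonempty (Fin N) := ⟨k⟩
  set S := ∑ n ∈ univ.filter (fun n => n ≤ k), s n with hS
  have hSpos : 0 < S := by
    apply Finset.sum_pos (fun i _ => hs i)
    exact ⟨k, by simp⟩
  have hcS : c * S = (L : ℝ) - N + ((k : ℕ) + 1) := by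
    rw [hc]; field_simp
  have hfilt : univ.filter (fun n => n ≤ k) = Finset.Iic k := by
    ext x; simp
  have hcard : (univ.filter (fun n => n ≤ k)).card = (k : ℕ) + 1 := by
    rw [hfilt, Fin.card_Iic]
  have hkN : (k : ℕ) + 1 ≤ N := k.isLt
  have hcard2 : (univ.filter (fun n => ¬ n ≤ k)).card = N - ((k : ℕ) + 1) := by
    have h := Finset.card_filter_add_card_filter_not (s := univ)
      (p := fun n : Fin N => n ≤ k)
    rw [hcard, Finset.card_univ, Fintype.card_fin] at h
    omega
  have hsum : ∑ n, μ n = (L : ℝ) := by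
    rw [← Finset.sum_filter_add_sum_filter_not univ (fun n => n ≤ k)]
    have h1 : ∑ n ∈ univ.filter (fun n => n ≤ k), μ n = c * S := by
      rw [hS, Finset.mul_sum]
      apply Finset.sum_congr rfl
      intro n hn
      rw [Finset.mem_filter] at hn
      rw [hμ n, if_pos hn.2]
    have h2 : ∑ n ∈ univ.filter (fun n => ¬ n ≤ k), μ n = (N : ℝ) - ((k : ℕ) + 1) := by
      have heq : ∀ n ∈ univ.filter (fun n => ¬ n ≤ k), μ n = 1 := by
        intro n hn
        rw [Finset.mem_filter] at hn
        rw [hμ n, if_neg hn.2]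
      rw [Finset.sum_congr rfl heq, Finset.sum_const, hcard2, nsmul_eq_mul, mul_one,
        Nat.cast_sub hkN]
      push_cast; ring
    rw [h1, h2, hcS]; ring
  have hbnd : ∀ n, 0 ≤ μ n ∧ μ n ≤ 1 := by
    intro n; rw [hμ n]; split_ifs with h
    · refine ⟨mul_nonneg hcpos.le (hs n).le, ?_⟩
      have h1 : c * s n ≤ c * s k := mul_le_mul_of_nonneg_left (hsort n k h) hcpos.le
      have h2 : c * s k ≤ 1 := (le_div_iff₀ (hs k)).mp hck
      linarith
    · exact ⟨zero_le_one, le_rfl⟩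
  refine ⟨hsum, hbnd, ?_⟩
  have hle : ∀ n, μ n / s n ≤ c := by
    intro n; rw [hμ n]; split_ifs with h
    · rw [mul_div_assoc, div_self (hs n).ne', mul_one]
    · push_neg at h
      have hkn : (k : ℕ) < (n : ℕ) := h
      have hk1 : (k : ℕ) + 1 < N := lt_of_le_of_lt hkn n.isLt
      set m : Fin N := ⟨(k : ℕ) + 1, hk1⟩ with hm
      have hmn : s m ≤ s n := hsort m n (by simp [hm, Fin.le_def]; omega)
      have hmc : 1 / s m < c := hck1 m rfl
      have : 1 / s n ≤ 1 / s m := one_div_le_one_div_of_le (hs m) hmn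
      linarith
  have hsupμ : (⨆ n, μ n / s n) = c := by
    apply le_antisymm (ciSup_le hle)
    have hk : μ k / s k = c := by
      rw [hμ k, if_pos le_rfl, mul_div_assoc, div_self (hs k).ne', mul_one]
    calc c = μ k / s k := hk.symm
      _ ≤ ⨆ n, μ n / s n :=
        le_ciSup (f := fun n => μ n / s n) (Set.Finite.bddAbove (Set.finite_range _)) k
  intro ν hνsum hνb
  rw [hsupμ]
  set M := ⨆ n, ν n / s n with hM
  have hMle : ∀ n, ν n ≤ M * s n := by
    intro n
    have h1 : ν n / s n ≤ M :=
      le_ciSup (f := fun n => ν n / s n) (Set.Finite.bddAbove (Set.finite_range _)) n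
    have := (div_le_iff₀ (hs n)).mp h1
    linarith
  by_contra hlt; push_neg at hlt
  have hL1 : (L : ℝ) ≤ M * S + ((N : ℝ) - ((k : ℕ) + 1)) := by
    rw [← hνsum, ← Finset.sum_filter_add_sum_filter_not univ (fun n => n ≤ k)]
    apply add_le_add
    · rw [hS, Finset.mul_sum]
      exact Finset.sum_le_sum fun n _ => hMle n
    · calc ∑ n ∈ univ.filter (fun n => ¬ n ≤ k), ν n
          ≤ ∑ _n ∈ univ.filter (fun n => ¬ n ≤ k), (1 : ℝ) :=
            Finset.sum_le_sum fun n _ => (hνb n).2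
        _ = (N : ℝ) - ((k : ℕ) + 1) := by
            rw [Finset.sum_const, hcard2, nsmul_eq_mul, mul_one, Nat.cast_sub hkN]
            push_cast; ring
  have hMS : M * S < c * S := mul_lt_mul_of_pos_right hlt hSpos
  have : (L : ℝ) < (L : ℝ) := by
    calc (L : ℝ) ≤ M * S + ((N : ℝ) - ((k : ℕ) + 1)) := hL1
      _ < c * S + ((N : ℝ) - ((k : ℕ) + 1)) := by linarith
      _ = (L : ℝ) := by rw [hcS]; ring
  exact lt_irrefl _ this
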